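/- (Locality of separation within a source cluster.) Let V be a finite set partitioned into two nonempty clusters C_1, C_2, and let G be a DAG over V compatible with the two-cluster C-DAG whose only edge is C_1 → C_2. Then: (a) every descendant in G of every vertex of C_2 belongs to C_2; (b) every path in G between two vertices of C_1 that contains a vertex of C_2 contains a collider lying in C_2; and consequently (c) for all X, Y ∈ C_1 and every S ⊆ C_1 \ {X, Y}, X and Y are d-separated by S in G if and only if X and Y are d-separated by S in the induced subgraph of G on C_1. -/

import Mathlib

/-- A directed mixed graph over a vertex type `V`: a set of directed edges and a
symmetric set of bidirected edges between distinct vertices. -/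
structure DMG (V : Type) where
  dir : V → V → Prop
  bidir : V → V → Prop
  bidir_symm : ∀ x y, bidir x y → bidir y x
  dir_ne : ∀ x y, dir x y → x ≠ y
  bidir_ne : ∀ x y, bidir x y → x ≠ y

namespace DMG

variable {V : Type} {I : Type}

/-- `X` is an ancestor of `Y`: there is a directed path of length ≥ 1 from `X` to `Y`. -/
def Anc (G : DMG V) : V → V → Prop := Relation.TransGen G.dir

/-- No directed cycles. -/
def Acyclic (G : DMG V) : Prop := ∀ x, ¬ G.Anc x x

/-- No bidirected edges. -/
def NoBidir (G : DMG V) : Prop := ∀ x y, ¬ G.bidir x y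

/-- A DAG: no bidirected edges and no directed cycles. -/
def IsDAG (G : DMG V) : Prop := G.Acyclic ∧ G.NoBidir

/-- Two vertices are adjacent if joined by a directed or bidirected edge. -/
def Adj (G : DMG V) (x y : V) : Prop := G.dir x y ∨ G.dir y x ∨ G.bidir x y

/-- Ancestral graph: no directed cycle, no almost directed cycle. -/
def Ancestral (G : DMG V) : Prop :=
  G.Acyclic ∧ ∀ x y, G.bidir x y → ¬ G.Anc x y

/-- The cluster graph induced by `G` on the partition of `V` into the fibers of `π`. -/
def clusterGraph (G : DMG V) (π : V → I) : DMG I where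
  dir i j := i ≠ j ∧ ∃ x y, π x = i ∧ π y = j ∧ G.dir x y
  bidir i j := i ≠ j ∧ ∃ x y, π x = i ∧ π y = j ∧ G.bidir x y
  bidir_symm := by
    rintro i j ⟨hne, x, y, hx, hy, hb⟩
    exact ⟨hne.symm, y, x, hy, hx, G.bidir_symm _ _ hb⟩
  dir_ne := fun _ _ h => h.1
  bidir_ne := fun _ _ h => h.1

/-- `G` is compatible with the cluster graph `GC` (over the partition given by the
fibers of `π`) if the cluster graph induced by `G` equals `GC`. -/
def CompatibleWith (G : DMG V) (π : V → I) (GC : DMG I) : Prop :=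
  (∀ i j, GC.dir i j ↔ (G.clusterGraph π).dir i j) ∧
  (∀ i j, GC.bidir i j ↔ (G.clusterGraph π).bidir i j)

/-- Walks in a directed mixed graph: each consecutive pair of vertices is joined
by a directed edge (in either direction) or a bidirected edge, and we remember
which edge is used. -/
inductive Walk (G : DMG V) : V → V → Type
  | nil (x : V) : Walk G x x
  | fwd {x y z : V} (h : G.dir x y) (w : Walk G y z) : Walk G x z
  | bwd {x y z : V} (h : G.dir y x) (w : Walk G y z) : Walk G x z
  | bi  {x y z : V} (h : G.bidir x y) (w : Walk G y z) : Walk G x z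

namespace Walk

variable {G : DMG V}

/-- The list of vertices visited by a walk. -/
def support : {x y : V} → Walk G x y → List V
  | _, _, .nil x => [x]
  | _, _, .fwd (x := x) _ w => x :: w.support
  | _, _, .bwd (x := x) _ w => x :: w.support
  | _, _, .bi (x := x) _ w => x :: w.support

/-- Whether a walk is trivial. -/
def isNil : {x y : V} → Walk G x y → Bool
  | _, _, .nil _ => true
  | _, _, .fwd _ _ => false
  | _, _, .bwd _ _ => false
  | _, _, .bi _ _ => false

/-- Whether the first edge of the walk has an arrowhead at the first vertex. -/
def headAtStart : {x y : V} → Walk G x y → Bool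
  | _, _, .nil _ => false
  | _, _, .fwd _ _ => false
  | _, _, .bwd _ _ => true
  | _, _, .bi _ _ => true

/-- The internal (non-endpoint) vertices of a walk, each paired with a Boolean
recording whether it is a collider on the walk (both incident edges of the walk
have an arrowhead at it). -/
def marked : {x y : V} → Walk G x y → List (V × Bool)
  | _, _, .nil _ => []
  | _, _, .fwd (y := y) _ w => (if w.isNil then [] else [(y, w.headAtStart)]) ++ w.marked
  | _, _, .bwd (y := y) _ w => (if w.isNil then [] else [(y, false)]) ++ w.marked
  | _, _, .bi (y := y) _ w => (if w.isNil then [] else [(y, w.headAtStart)]) ++ w.marked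

/-- A walk is a path if its vertices are pairwise distinct. -/
def IsPath {x y : V} (w : Walk G x y) : Prop := w.support.Nodup

/-- A walk is blocked by `S` if it contains a non-collider belonging to `S`, or a
collider such that neither the collider nor any of its descendants belongs to `S`. -/
def Blocked {x y : V} (w : Walk G x y) (S : Set V) : Prop :=
  ∃ p ∈ w.marked,
    (p.2 = false ∧ p.1 ∈ S) ∨
    (p.2 = true ∧ p.1 ∉ S ∧ ∀ d, G.Anc p.1 d → d ∉ S)

end Walk

/-- `x` and `y` are m-separated by `S` in `G`: every path between `x` and `y`
is blocked by `S`.  (In a DAG this is d-separation.) -/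
def MSep (G : DMG V) (x y : V) (S : Set V) : Prop :=
  ∀ w : Walk G x y, w.IsPath → w.Blocked S

/-- Vertex sets `A` and `B` are m-separated by `S`. -/
def MSepSets (G : DMG V) (A B S : Set V) : Prop :=
  ∀ x ∈ A, ∀ y ∈ B, G.MSep x y S

/-- The induced subgraph of `G` on a set `A` of vertices. -/
def induce (G : DMG V) (A : Set V) : DMG A where
  dir x y := G.dir x.1 y.1
  bidir x y := G.bidir x.1 y.1
  bidir_symm := fun _ _ h => G.bidir_symm _ _ h
  dir_ne := fun _ _ h he => G.dir_ne _ _ h (congrArg Subtype.val he)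
  bidir_ne := fun _ _ h he => G.bidir_ne _ _ h (congrArg Subtype.val he)

end DMG

open DMG in
/-- The two-cluster C-DAG whose only edge is `C₁ → C₂` (clusters indexed by `Fin 2`,
`C₁` = fiber of `0`, `C₂` = fiber of `1`). -/
def GC14 : DMG (Fin 2) where
  dir i j := i = 0 ∧ j = 1
  bidir _ _ := False
  bidir_symm := fun _ _ h => h.elim
  dir_ne := by rintro x y ⟨hx, hy⟩; subst hx; subst hy; decide
  bidir_ne := fun _ _ h => h.elim

namespace DMG
namespace Walk

variable {V : Type} {G : DMG V} {A : Set V}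

/-- Embed a walk in an induced subgraph into the ambient graph. -/
def embed : {x y : A} → Walk (G.induce A) x y → Walk G x.val y.val
  | _, _, .nil x => .nil x.val
  | _, _, .fwd h w => .fwd h w.embed
  | _, _, .bwd h w => .bwd h w.embed
  | _, _, .bi h w => .bi h w.embed

lemma embed_support : ∀ {x y : A} (w : Walk (G.induce A) x y),
    w.embed.support = w.support.map Subtype.val
  | _, _, .nil x => rfl
  | _, _, .fwd h w => by simp [embed, support, embed_support w]
  | _, _, .bwd h w => by simp [embed, support, embed_support w]
  | _, _, .bi h w => by simp [embed, support, embed_support w]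

lemma embed_isNil : ∀ {x y : A} (w : Walk (G.induce A) x y), w.embed.isNil = w.isNil
  | _, _, .nil _ => rfl
  | _, _, .fwd .. => rfl
  | _, _, .bwd .. => rfl
  | _, _, .bi .. => rfl

lemma embed_headAtStart : ∀ {x y : A} (w : Walk (G.induce A) x y),
    w.embed.headAtStart = w.headAtStart
  | _, _, .nil _ => rfl
  | _, _, .fwd .. => rfl
  | _, _, .bwd .. => rfl
  | _, _, .bi .. => rfl

lemma embed_marked : ∀ {x y : A} (w : Walk (G.induce A) x y),
    w.embed.marked = w.marked.map (fun p => (p.1.val, p.2))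
  | _, _, .nil _ => rfl
  | _, _, .fwd h w => by
      simp [embed, marked, embed_isNil w, embed_headAtStart w, embed_marked w,
        apply_ite (List.map (fun p : A × Bool => (p.1.val, p.2)))]
  | _, _, .bwd h w => by
      simp [embed, marked, embed_isNil w, embed_marked w,
        apply_ite (List.map (fun p : A × Bool => (p.1.val, p.2)))]
  | _, _, .bi h w => by
      simp [embed, marked, embed_isNil w, embed_headAtStart w, embed_marked w,
        apply_ite (List.map (fun p : A × Bool => (p.1.val, p.2)))]

lemma start_mem_support : ∀ {x y : V} (w : Walk G x y), x ∈ w.support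
  | _, _, .nil _ => by simp [support]
  | _, _, .fwd h w => by simp [support]
  | _, _, .bwd h w => by simp [support]
  | _, _, .bi h w => by simp [support]

lemma end_mem_support : ∀ {x y : V} (w : Walk G x y), y ∈ w.support
  | _, _, .nil _ => by simp [support]
  | _, _, .fwd h w => by simp [support, end_mem_support w]
  | _, _, .bwd h w => by simp [support, end_mem_support w]
  | _, _, .bi h w => by simp [support, end_mem_support w]

lemma eq_of_isNil : ∀ {x y : V} (w : Walk G x y), w.isNil = true → x = y
  | _, _, .nil _, _ => rfl

lemma exists_lift {x y : V} (w : Walk G x y) : (∀ v ∈ w.support, v ∈ A) →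
    ∀ (hx : x ∈ A) (hy : y ∈ A),
    ∃ w' : Walk (G.induce A) ⟨x, hx⟩ ⟨y, hy⟩, w'.embed = w := by
  induction w with
  | nil x =>
      intro _ hx hy
      exact ⟨Walk.nil (⟨x, hx⟩ : A), rfl⟩
  | @fwd a v z h w ih =>
      intro hall hx hy
      have hv : v ∈ A := hall v (by simp [support, start_mem_support w])
      obtain ⟨w', hw'⟩ := ih (fun u hu => hall u (by simp [support, hu])) hv hy
      exact ⟨Walk.fwd (show (G.induce A).dir ⟨a, hx⟩ ⟨v, hv⟩ from h) w', by simp [embed, hw']⟩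
  | @bwd a v z h w ih =>
      intro hall hx hy
      have hv : v ∈ A := hall v (by simp [support, start_mem_support w])
      obtain ⟨w', hw'⟩ := ih (fun u hu => hall u (by simp [support, hu])) hv hy
      exact ⟨Walk.bwd (show (G.induce A).dir ⟨v, hv⟩ ⟨a, hx⟩ from h) w', by simp [embed, hw']⟩
  | @bi a v z h w ih =>
      intro hall hx hy
      have hv : v ∈ A := hall v (by simp [support, start_mem_support w])
      obtain ⟨w', hw'⟩ := ih (fun u hu => hall u (by simp [support, hu])) hv hy
      exact ⟨Walk.bi (show (G.induce A).bidir ⟨a, hx⟩ ⟨v, hv⟩ from h) w', by simp [embed, hw']⟩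

end Walk
lemma anc_embed {V : Type} {G : DMG V} {A : Set V} {a b : A}
    (h : (G.induce A).Anc a b) : G.Anc a.val b.val := by
  induction h with
  | single h => exact .single h
  | tail _ h ih => exact .tail ih h

end DMG

open DMG in
/-- Locality of separation within a source cluster: if a DAG `G` is
compatible with the two-cluster C-DAG `C₁ → C₂`, then (a) descendants of vertices of
`C₂` stay in `C₂`; (b) every path between vertices of `C₁` that meets `C₂` contains
a collider in `C₂`; and (c) for `X, Y ∈ C₁` and `S ⊆ C₁ \ {X, Y}`, `X` and `Y` are
d-separated by `S` in `G` iff they are d-separated by `S` in the induced subgraph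
of `G` on `C₁`. -/
theorem stmt14 {V : Type} [Fintype V]
    (π : V → Fin 2) (hsurj : Function.Surjective π)
    (G : DMG V) (hG : G.IsDAG) (hcomp : G.CompatibleWith π GC14) :
    (∀ x y, π x = 1 → G.Anc x y → π y = 1) ∧
    (∀ x y, π x = 0 → π y = 0 → ∀ w : DMG.Walk G x y, w.IsPath →
        (∃ v ∈ w.support, π v = 1) →
        ∃ p ∈ w.marked, p.2 = true ∧ π p.1 = 1) ∧
    (∀ x y : V, ∀ hx : π x = 0, ∀ hy : π y = 0, ∀ S : Set V,
        S ⊆ {v | π v = 0} \ {x, y} →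
        (G.MSep x y S ↔
          (G.induce {v | π v = 0}).MSep ⟨x, hx⟩ ⟨y, hy⟩ (Subtype.val ⁻¹' S))) := by
  have h2 : ∀ i : Fin 2, i = 0 ∨ i = 1 := by decide
  -- cross-cluster edges go from cluster 0 to cluster 1
  have cross0 : ∀ a b, G.dir a b → π a ≠ π b → π a = 0 ∧ π b = 1 := by
    intro a b h hne
    exact (hcomp.1 (π a) (π b)).mpr ⟨hne, a, b, rfl, rfl, h⟩
  have out1 : ∀ a b, G.dir a b → π a = 1 → π b = 1 := by
    intro a b h ha
    by_contra hb
    have hne : π a ≠ π b := fun he => hb (he ▸ ha)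
    have := (cross0 a b h hne).1
    rw [ha] at this; exact absurd this (by decide)
  have into0 : ∀ a b, G.dir a b → π b = 0 → π a = 0 := by
    intro a b h hb
    rcases h2 (π a) with ha | ha
    · exact ha
    · have := out1 a b h ha
      rw [this] at hb; exact absurd hb (by decide)
  -- part (a)
  have parta : ∀ x y, π x = 1 → G.Anc x y → π y = 1 := by
    intro x y hx h
    induction h with
    | single h => exact out1 _ _ h hx
    | tail _ h ih => exact out1 _ _ h ih
  -- key lemma: a walk from cluster 1 to cluster 0 either starts with an arrowhead
  -- at its start, or contains a collider in cluster 1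
  have L : ∀ u y (w : DMG.Walk G u y), π u = 1 → π y = 0 →
      w.headAtStart = true ∨ ∃ p ∈ w.marked, p.2 = true ∧ π p.1 = 1 := by
    intro u y w
    induction w with
    | nil x =>
        intro h1 h0
        rw [h1] at h0; exact absurd h0 (by decide)
    | @fwd a v z h w ih =>
        intro hu hy
        have hv : π v = 1 := out1 _ _ h hu
        have hnil : w.isNil = false := by
          cases heq : w.isNil
          · rfl
          · have := Walk.eq_of_isNil w heq
            subst this
            rw [hv] at hy; exact absurd hy (by decide)
        rcases ih hv hy with hh | ⟨p, hp, h1, h2'⟩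
        · right
          exact ⟨(v, w.headAtStart), by simp [Walk.marked, hnil], by simp [hh], hv⟩
        · right
          exact ⟨p, by simp [Walk.marked, hp], h1, h2'⟩
    | @bwd a v z h w ih =>
        intro _ _
        left; rfl
    | @bi a v z h w ih =>
        exact absurd h (hG.2 _ _)
  -- part (b)
  have partb : ∀ u y (w : DMG.Walk G u y), π u = 0 → π y = 0 →
      (∃ v ∈ w.support, π v = 1) → ∃ p ∈ w.marked, p.2 = true ∧ π p.1 = 1 := by
    intro u y w
    induction w with
    | nil x =>
        intro hu _ ⟨v, hv, hv1⟩
        simp [Walk.support] at hv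
        subst hv
        rw [hu] at hv1; exact absurd hv1 (by decide)
    | @fwd a v z h w ih =>
        intro hu hy hm
        rcases h2 (π v) with hv | hv
        · obtain ⟨t, ht, ht1⟩ := hm
          simp [Walk.support] at ht
          rcases ht with rfl | ht
          · rw [hu] at ht1; exact absurd ht1 (by decide)
          · obtain ⟨p, hp, h1, h2'⟩ := ih hv hy ⟨t, ht, ht1⟩
            exact ⟨p, by simp [Walk.marked, hp], h1, h2'⟩
        · have hnil : w.isNil = false := by
            cases heq : w.isNil
            · rfl
            · have := Walk.eq_of_isNil w heq
              subst this
              rw [hv] at hy; exact absurd hy (by decide)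
          rcases L v z w hv hy with hh | ⟨p, hp, h1, h2'⟩
          · exact ⟨(v, w.headAtStart), by simp [Walk.marked, hnil], by simp [hh], hv⟩
          · exact ⟨p, by simp [Walk.marked, hp], h1, h2'⟩
    | @bwd a v z h w ih =>
        intro hu hy hm
        have hv : π v = 0 := into0 _ _ h hu
        obtain ⟨t, ht, ht1⟩ := hm
        simp [Walk.support] at ht
        rcases ht with rfl | ht
        · rw [hu] at ht1; exact absurd ht1 (by decide)
        · obtain ⟨p, hp, h1, h2'⟩ := ih hv hy ⟨t, ht, ht1⟩
          exact ⟨p, by simp [Walk.marked, hp], h1, h2'⟩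
    | @bi a v z h w ih =>
        exact absurd h (hG.2 _ _)
  -- ancestors within cluster 0 are ancestors in the induced graph
  have ancC1 : ∀ (d : V) (hd : π d = 0) (a : V), G.Anc a d → ∀ ha : π a = 0,
      (G.induce {v | π v = 0}).Anc ⟨a, ha⟩ ⟨d, hd⟩ := by
    intro d hd a h
    induction h using Relation.TransGen.head_induction_on with
    | single h =>
        intro ha
        exact Relation.TransGen.single
          (show (G.induce {v | π v = 0}).dir ⟨_, ha⟩ ⟨_, hd⟩ from h)
    | head h ht ih =>
        rename_i a' c
        intro ha
        have hc : π c = 0 := by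
          rcases h2 (π c) with hc | hc
          · exact hc
          · have := parta _ _ hc ht
            rw [this] at hd; exact absurd hd (by decide)
        exact Relation.TransGen.head
          (show (G.induce {v | π v = 0}).dir ⟨_, ha⟩ ⟨_, hc⟩ from h) (ih hc)
  refine ⟨parta, fun x y hx hy w _ hm => partb x y w hx hy hm, ?_⟩
  intro x y hx hy S hS
  constructor
  · -- G-separation implies induced-graph separation
    intro hsep w' hw'
    have hpath : w'.embed.IsPath := by
      rw [Walk.IsPath, Walk.embed_support]
      exact hw'.map (fun a b hab => Subtype.val_injective hab)
    obtain ⟨p, hp, hblk⟩ := hsep w'.embed hpath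
    rw [Walk.embed_marked] at hp
    obtain ⟨q, hq, hqp⟩ := List.mem_map.mp hp
    refine ⟨q, hq, ?_⟩
    rcases hblk with ⟨hf, hin⟩ | ⟨ht, hout, hanc⟩
    · left
      refine ⟨?_, ?_⟩
      · have : q.2 = p.2 := congrArg Prod.snd hqp
        rw [this, hf]
      · show q.1.val ∈ S
        have : q.1.val = p.1 := congrArg Prod.fst hqp
        rw [this]; exact hin
    · right
      have h1 : q.1.val = p.1 := congrArg Prod.fst hqp
      have h2' : q.2 = p.2 := congrArg Prod.snd hqp
      refine ⟨by rw [h2', ht], ?_, ?_⟩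
      · show q.1.val ∉ S
        rw [h1]; exact hout
      · intro d hd hdS
        exact hanc d.val (h1 ▸ DMG.anc_embed hd) hdS
  · -- induced-graph separation implies G-separation
    intro hsep w hw
    by_cases hmeet : ∃ v ∈ w.support, π v = 1
    · obtain ⟨p, hp, hcol, hp1⟩ := partb x y w hx hy hmeet
      refine ⟨p, hp, Or.inr ⟨hcol, ?_, ?_⟩⟩
      · intro hin
        have : π p.1 = 0 := (hS hin).1
        rw [hp1] at this; exact absurd this (by decide)
      · intro d hd hin
        have hd1 : π d = 1 := parta _ _ hp1 hd
        have : π d = 0 := (hS hin).1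
        rw [hd1] at this; exact absurd this (by decide)
    · push_neg at hmeet
      have hall : ∀ v ∈ w.support, v ∈ {v | π v = 0} := by
        intro v hv
        rcases h2 (π v) with h | h
        · exact h
        · exact absurd h (hmeet v hv)
      obtain ⟨w', hw'⟩ := Walk.exists_lift w hall hx hy
      have hw'path : w'.IsPath := by
        have : w'.embed.support = w.support := by rw [hw']
        rw [Walk.embed_support] at this
        rw [Walk.IsPath, ← this] at hw
        exact hw.of_map Subtype.val
      obtain ⟨q, hq, hblk⟩ := hsep w' hw'path
      have hqm : (q.1.val, q.2) ∈ w.marked := by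
        rw [← hw', Walk.embed_marked]
        exact List.mem_map.mpr ⟨q, hq, rfl⟩
      refine ⟨(q.1.val, q.2), hqm, ?_⟩
      rcases hblk with ⟨hf, hin⟩ | ⟨ht, hout, hanc⟩
      · exact Or.inl ⟨hf, hin⟩
      · refine Or.inr ⟨ht, hout, ?_⟩
        intro d hd hdS
        have hd0 : π d = 0 := (hS hdS).1
        have hq0 : π q.1.val = 0 := q.1.2
        have := ancC1 d hd0 q.1.val hd hq0
        exact hanc ⟨d, hd0⟩ this hdS
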